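/- Under the model constraints, the parameters are exactly recovered by population projections: θ = (XᵀX)⁻¹ Xᵀ P_R (Xβ + Xθ + α), β = (XᵀX)⁻¹ Xᵀ P_C (Xβ + Xθ + α), and α = P_N (Xβ + Xθ + α). -/

import Mathlib

open Matrix

noncomputable def specNorm {m n : Type*} [Fintype m] [Fintype n] [DecidableEq n]
    (A : Matrix m n ℝ) : ℝ :=
  ‖LinearMap.toContinuousLinearMap (Matrix.toEuclideanLin A)‖

noncomputable def vnorm {n : Type*} [Fintype n] (v : n → ℝ) : ℝ :=
  Real.sqrt (∑ i, v i ^ 2)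


lemma aux_sum_mulVec {ι n' m' : Type*} [Fintype m'] (s : Finset ι)
    (f : ι → Matrix n' m' ℝ) (v : m' → ℝ) :
    (∑ i ∈ s, f i) *ᵥ v = ∑ i ∈ s, (f i) *ᵥ v := by
  ext a
  simp only [Matrix.mulVec, dotProduct, Matrix.sum_apply, Finset.sum_apply,
    Finset.sum_mul]
  exact Finset.sum_comm

lemma aux_mulVec_sum {ι n' m' : Type*} [Fintype m'] (s : Finset ι)
    (Q : Matrix n' m' ℝ) (f : ι → m' → ℝ) :
    Q *ᵥ (∑ i ∈ s, f i) = ∑ i ∈ s, Q *ᵥ (f i) := by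
  ext a
  simp only [Matrix.mulVec, dotProduct, Finset.sum_apply, Finset.mul_sum]
  exact Finset.sum_comm

lemma aux_vecMulVec_mulVec {n' m' : Type*} [Fintype m'] (w : n' → ℝ) (u : m' → ℝ)
    (v : m' → ℝ) : (Matrix.vecMulVec w u) *ᵥ v = (u ⬝ᵥ v) • w := by
  ext a
  simp only [Matrix.mulVec, Matrix.vecMulVec_apply, dotProduct, Pi.smul_apply,
    smul_eq_mul, Finset.sum_mul]
  exact Finset.sum_congr rfl fun b _ => by ring

lemma aux_sum_val_eq {t : ℕ} (m : ℕ) (f : Fin t → ℝ) :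
    ∑ k : Fin t, (if m = (k : ℕ) then f k else 0)
      = if h : m < t then f ⟨m, h⟩ else 0 := by
  split
  · next h =>
    rw [Finset.sum_eq_single (⟨m, h⟩ : Fin t)
      (fun b _ hb => if_neg (fun he => hb (Fin.ext he.symm)))
      (fun hb => absurd (Finset.mem_univ _) hb)]
    simp
  · next h =>
    exact Finset.sum_eq_zero fun k _ => if_neg (by have := k.2; omega)

noncomputable def Gm (p' K' : ℕ) (τ : ℕ → ℝ) :
    Matrix (Fin p' ⊕ Fin K') (Fin p' ⊕ Fin K') ℝ :=
  Matrix.of fun x y =>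
    match x, y with
    | .inl i, .inl i' => if (i : ℕ) = (i' : ℕ) then 1 else 0
    | .inl i, .inr j => if (i : ℕ) = (j : ℕ) then τ i else 0
    | .inr j, .inl i => if (j : ℕ) = (i : ℕ) then τ j else 0
    | .inr j, .inr j' => if (j : ℕ) = (j' : ℕ) then 1 else 0

noncomputable def Nm (p' K' : ℕ) (τ : ℕ → ℝ) :
    Matrix (Fin p' ⊕ Fin K') (Fin p' ⊕ Fin K') ℝ :=
  Matrix.of fun x y =>
    match x, y with
    | .inl i, .inl i' => if (i : ℕ) = (i' : ℕ) then (1 - τ i ^ 2)⁻¹ else 0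
    | .inl i, .inr j => if (i : ℕ) = (j : ℕ) then -τ i * (1 - τ i ^ 2)⁻¹ else 0
    | .inr j, .inl i => if (j : ℕ) = (i : ℕ) then -τ j * (1 - τ j ^ 2)⁻¹ else 0
    | .inr j, .inr j' => if (j : ℕ) = (j' : ℕ) then (1 - τ j ^ 2)⁻¹ else 0

lemma Gm_mul_Nm (p' K' : ℕ) (τ : ℕ → ℝ) (h0 : ∀ k, 0 ≤ τ k) (h1 : ∀ k, τ k < 1)
    (hz1 : ∀ k, p' ≤ k → τ k = 0) (hz2 : ∀ k, K' ≤ k → τ k = 0) :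
    Gm p' K' τ * Nm p' K' τ = 1 := by
  have hne : ∀ k : ℕ, 1 - τ k ^ 2 ≠ 0 := by
    intro k
    have := h0 k; have := h1 k
    nlinarith
  ext x y
  rw [Matrix.mul_apply, Fintype.sum_sum_type]
  cases x with
  | inl i =>
    cases y with
    | inl i' =>
      have e1 : ∑ k : Fin p', Gm p' K' τ (.inl i) (.inl k) * Nm p' K' τ (.inl k) (.inl i')
          = if (i : ℕ) < p' then (if (i : ℕ) = (i' : ℕ) then (1 - τ (i : ℕ) ^ 2)⁻¹ else 0) else 0 := by
        have hterm : ∀ k : Fin p', Gm p' K' τ (.inl i) (.inl k) * Nm p' K' τ (.inl k) (.inl i')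
            = if (i : ℕ) = (k : ℕ) then (if (i : ℕ) = (i' : ℕ) then (1 - τ (i : ℕ) ^ 2)⁻¹ else 0) else 0 := by
          rintro ⟨v, hv⟩
          by_cases ha : (i : ℕ) = v
          · subst ha
            by_cases hb : (i : ℕ) = (i' : ℕ) <;> simp [Gm, Nm, hb] <;> ring
          · simp [Gm, Nm, ha]
        rw [Finset.sum_congr rfl (fun k _ => hterm k), aux_sum_val_eq]
        by_cases h : (i : ℕ) < p' <;> simp [h]
      have e2 : ∑ j : Fin K', Gm p' K' τ (.inl i) (.inr j) * Nm p' K' τ (.inr j) (.inl i')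
          = if (i : ℕ) < K' then (if (i : ℕ) = (i' : ℕ) then -(τ (i : ℕ) ^ 2) * (1 - τ (i : ℕ) ^ 2)⁻¹ else 0) else 0 := by
        have hterm : ∀ j : Fin K', Gm p' K' τ (.inl i) (.inr j) * Nm p' K' τ (.inr j) (.inl i')
            = if (i : ℕ) = (j : ℕ) then (if (i : ℕ) = (i' : ℕ) then -(τ (i : ℕ) ^ 2) * (1 - τ (i : ℕ) ^ 2)⁻¹ else 0) else 0 := by
          rintro ⟨v, hv⟩
          by_cases ha : (i : ℕ) = v
          · subst ha
            by_cases hb : (i : ℕ) = (i' : ℕ) <;> simp [Gm, Nm, hb] <;> ring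
          · simp [Gm, Nm, ha]
        rw [Finset.sum_congr rfl (fun j _ => hterm j), aux_sum_val_eq]
        by_cases h : (i : ℕ) < K' <;> simp [h]
      have hinj : ((Sum.inl i : Fin p' ⊕ Fin K') = Sum.inl i') ↔ ((i : ℕ) = (i' : ℕ)) := by
        constructor
        · intro h; injection h with h'; exact congrArg Fin.val h'
        · intro h; congr 1; exact Fin.ext h
      rw [e1, e2, Matrix.one_apply, if_pos i.2, if_congr hinj rfl rfl]
      by_cases hii : (i : ℕ) = (i' : ℕ)
      · rw [if_pos hii, if_pos hii, if_pos hii]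
        by_cases hK : (i : ℕ) < K'
        · rw [if_pos hK]
          have hd := hne (i : ℕ)
          field_simp [hd] <;> ring
        · rw [if_neg hK, hz2 _ (not_lt.mp hK)]
          norm_num
      · rw [if_neg hii, if_neg hii, if_neg hii]
        simp
    | inr j' =>
      have e1 : ∑ k : Fin p', Gm p' K' τ (.inl i) (.inl k) * Nm p' K' τ (.inl k) (.inr j')
          = if (i : ℕ) < p' then (if (i : ℕ) = (j' : ℕ) then -τ (i : ℕ) * (1 - τ (i : ℕ) ^ 2)⁻¹ else 0) else 0 := by
        have hterm : ∀ k : Fin p', Gm p' K' τ (.inl i) (.inl k) * Nm p' K' τ (.inl k) (.inr j')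
            = if (i : ℕ) = (k : ℕ) then (if (i : ℕ) = (j' : ℕ) then -τ (i : ℕ) * (1 - τ (i : ℕ) ^ 2)⁻¹ else 0) else 0 := by
          rintro ⟨v, hv⟩
          by_cases ha : (i : ℕ) = v
          · subst ha
            by_cases hb : (i : ℕ) = (j' : ℕ) <;> simp [Gm, Nm, hb] <;> ring
          · simp [Gm, Nm, ha]
        rw [Finset.sum_congr rfl (fun k _ => hterm k), aux_sum_val_eq]
        by_cases h : (i : ℕ) < p' <;> simp [h]
      have e2 : ∑ j : Fin K', Gm p' K' τ (.inl i) (.inr j) * Nm p' K' τ (.inr j) (.inr j')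
          = if (i : ℕ) < K' then (if (i : ℕ) = (j' : ℕ) then τ (i : ℕ) * (1 - τ (i : ℕ) ^ 2)⁻¹ else 0) else 0 := by
        have hterm : ∀ j : Fin K', Gm p' K' τ (.inl i) (.inr j) * Nm p' K' τ (.inr j) (.inr j')
            = if (i : ℕ) = (j : ℕ) then (if (i : ℕ) = (j' : ℕ) then τ (i : ℕ) * (1 - τ (i : ℕ) ^ 2)⁻¹ else 0) else 0 := by
          rintro ⟨v, hv⟩
          by_cases ha : (i : ℕ) = v
          · subst ha
            by_cases hb : (i : ℕ) = (j' : ℕ) <;> simp [Gm, Nm, hb] <;> ring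
          · simp [Gm, Nm, ha]
        rw [Finset.sum_congr rfl (fun j _ => hterm j), aux_sum_val_eq]
        by_cases h : (i : ℕ) < K' <;> simp [h]
      rw [e1, e2, Matrix.one_apply, if_pos i.2,
        if_neg (show (Sum.inl i : Fin p' ⊕ Fin K') ≠ Sum.inr j' from by simp)]
      by_cases hij : (i : ℕ) = (j' : ℕ)
      · have hK : (i : ℕ) < K' := by rw [hij]; exact j'.2
        rw [if_pos hK, if_pos hij, if_pos hij]
        ring
      · rw [if_neg hij, if_neg hij]
        simp
  | inr j =>
    cases y with
    | inl i' =>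
      have e1 : ∑ k : Fin p', Gm p' K' τ (.inr j) (.inl k) * Nm p' K' τ (.inl k) (.inl i')
          = if (j : ℕ) < p' then (if (j : ℕ) = (i' : ℕ) then τ (j : ℕ) * (1 - τ (j : ℕ) ^ 2)⁻¹ else 0) else 0 := by
        have hterm : ∀ k : Fin p', Gm p' K' τ (.inr j) (.inl k) * Nm p' K' τ (.inl k) (.inl i')
            = if (j : ℕ) = (k : ℕ) then (if (j : ℕ) = (i' : ℕ) then τ (j : ℕ) * (1 - τ (j : ℕ) ^ 2)⁻¹ else 0) else 0 := by
          rintro ⟨v, hv⟩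
          by_cases ha : (j : ℕ) = v
          · subst ha
            by_cases hb : (j : ℕ) = (i' : ℕ) <;> simp [Gm, Nm, hb] <;> ring
          · simp [Gm, Nm, ha]
        rw [Finset.sum_congr rfl (fun k _ => hterm k), aux_sum_val_eq]
        by_cases h : (j : ℕ) < p' <;> simp [h]
      have e2 : ∑ j2 : Fin K', Gm p' K' τ (.inr j) (.inr j2) * Nm p' K' τ (.inr j2) (.inl i')
          = if (j : ℕ) < K' then (if (j : ℕ) = (i' : ℕ) then -τ (j : ℕ) * (1 - τ (j : ℕ) ^ 2)⁻¹ else 0) else 0 := by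
        have hterm : ∀ j2 : Fin K', Gm p' K' τ (.inr j) (.inr j2) * Nm p' K' τ (.inr j2) (.inl i')
            = if (j : ℕ) = (j2 : ℕ) then (if (j : ℕ) = (i' : ℕ) then -τ (j : ℕ) * (1 - τ (j : ℕ) ^ 2)⁻¹ else 0) else 0 := by
          rintro ⟨v, hv⟩
          by_cases ha : (j : ℕ) = v
          · subst ha
            by_cases hb : (j : ℕ) = (i' : ℕ) <;> simp [Gm, Nm, hb] <;> ring
          · simp [Gm, Nm, ha]
        rw [Finset.sum_congr rfl (fun j2 _ => hterm j2), aux_sum_val_eq]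
        by_cases h : (j : ℕ) < K' <;> simp [h]
      rw [e1, e2, Matrix.one_apply, if_pos j.2,
        if_neg (show (Sum.inr j : Fin p' ⊕ Fin K') ≠ Sum.inl i' from by simp)]
      by_cases hji : (j : ℕ) = (i' : ℕ)
      · have hP : (j : ℕ) < p' := by rw [hji]; exact i'.2
        rw [if_pos hP, if_pos hji, if_pos hji]
        ring
      · rw [if_neg hji, if_neg hji]
        simp
    | inr j' =>
      have e1 : ∑ k : Fin p', Gm p' K' τ (.inr j) (.inl k) * Nm p' K' τ (.inl k) (.inr j')
          = if (j : ℕ) < p' then (if (j : ℕ) = (j' : ℕ) then -(τ (j : ℕ) ^ 2) * (1 - τ (j : ℕ) ^ 2)⁻¹ else 0) else 0 := by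
        have hterm : ∀ k : Fin p', Gm p' K' τ (.inr j) (.inl k) * Nm p' K' τ (.inl k) (.inr j')
            = if (j : ℕ) = (k : ℕ) then (if (j : ℕ) = (j' : ℕ) then -(τ (j : ℕ) ^ 2) * (1 - τ (j : ℕ) ^ 2)⁻¹ else 0) else 0 := by
          rintro ⟨v, hv⟩
          by_cases ha : (j : ℕ) = v
          · subst ha
            by_cases hb : (j : ℕ) = (j' : ℕ) <;> simp [Gm, Nm, hb] <;> ring
          · simp [Gm, Nm, ha]
        rw [Finset.sum_congr rfl (fun k _ => hterm k), aux_sum_val_eq]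
        by_cases h : (j : ℕ) < p' <;> simp [h]
      have e2 : ∑ j2 : Fin K', Gm p' K' τ (.inr j) (.inr j2) * Nm p' K' τ (.inr j2) (.inr j')
          = if (j : ℕ) < K' then (if (j : ℕ) = (j' : ℕ) then (1 - τ (j : ℕ) ^ 2)⁻¹ else 0) else 0 := by
        have hterm : ∀ j2 : Fin K', Gm p' K' τ (.inr j) (.inr j2) * Nm p' K' τ (.inr j2) (.inr j')
            = if (j : ℕ) = (j2 : ℕ) then (if (j : ℕ) = (j' : ℕ) then (1 - τ (j : ℕ) ^ 2)⁻¹ else 0) else 0 := by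
          rintro ⟨v, hv⟩
          by_cases ha : (j : ℕ) = v
          · subst ha
            by_cases hb : (j : ℕ) = (j' : ℕ) <;> simp [Gm, Nm, hb] <;> ring
          · simp [Gm, Nm, ha]
        rw [Finset.sum_congr rfl (fun j2 _ => hterm j2), aux_sum_val_eq]
        by_cases h : (j : ℕ) < K' <;> simp [h]
      have hinj : ((Sum.inr j : Fin p' ⊕ Fin K') = Sum.inr j') ↔ ((j : ℕ) = (j' : ℕ)) := by
        constructor
        · intro h; injection h with h'; exact congrArg Fin.val h'
        · intro h; congr 1; exact Fin.ext h
      rw [e1, e2, Matrix.one_apply, if_pos j.2, if_congr hinj rfl rfl]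
      by_cases hjj : (j : ℕ) = (j' : ℕ)
      · rw [if_pos hjj, if_pos hjj, if_pos hjj]
        by_cases hP : (j : ℕ) < p'
        · rw [if_pos hP]
          have hd := hne (j : ℕ)
          field_simp [hd] <;> ring
        · rw [if_neg hP, hz1 _ (not_lt.mp hP)]
          norm_num
      · rw [if_neg hjj, if_neg hjj, if_neg hjj]
        simp

theorem stmt_5
    (n p K r s : ℕ) (hs : 1 ≤ s) (hrp : r + s ≤ p) (hrK : r + s ≤ K)
    (hpn : p ≤ n) (hKn : K ≤ n)
    (Z : Matrix (Fin n) (Fin p) ℝ) (W : Matrix (Fin n) (Fin K) ℝ)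
    (hZ : Zᵀ * Z = 1) (hW : Wᵀ * W = 1)
    (U : Matrix (Fin p) (Fin p) ℝ) (V : Matrix (Fin K) (Fin K) ℝ)
    (hU : Uᵀ * U = 1) (hV : Vᵀ * V = 1)
    (σ : ℕ → ℝ)
    (hσone : ∀ i, i < r → σ i = 1)
    (hσlt : σ r < 1)
    (hσanti : ∀ i j, i ≤ j → σ j ≤ σ i)
    (hσpos : 0 < σ (r + s - 1))
    (hσzero : ∀ i, r + s ≤ i → σ i = 0)
    (hSVD : Zᵀ * W
      = U * (Matrix.of fun (i : Fin p) (j : Fin K) =>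
          if (i : ℕ) = (j : ℕ) then σ (i : ℕ) else 0) * Vᵀ)
    (Zt : Matrix (Fin n) (Fin p) ℝ) (hZt : Zt = Z * U)
    (Wt : Matrix (Fin n) (Fin K) ℝ) (hWt : Wt = W * V)
    (M : Matrix (Fin n) (Fin (p - r) ⊕ Fin (K - r)) ℝ)
    (hMl : ∀ (a : Fin n) (j : Fin (p - r)),
      M a (Sum.inl j) = Zt a ⟨r + j.1, by have := j.2; omega⟩)
    (hMr : ∀ (a : Fin n) (j : Fin (K - r)),
      M a (Sum.inr j) = Wt a ⟨r + j.1, by have := j.2; omega⟩)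
    (PR PC PN : Matrix (Fin n) (Fin n) ℝ)
    (hPR : PR = ∑ i ∈ (Finset.range r).attach,
      Matrix.vecMulVec
        (fun a : Fin n => Zt a ⟨i.1, by have := Finset.mem_range.mp i.2; omega⟩)
        (fun a : Fin n => Zt a ⟨i.1, by have := Finset.mem_range.mp i.2; omega⟩))
    (hPC : PC = (Matrix.of fun (a : Fin n) (j : Fin (p - r) ⊕ Fin (K - r)) =>
        Sum.elim (fun j' : Fin (p - r) => Zt a ⟨r + j'.1, by have := j'.2; omega⟩)
                 (fun _ : Fin (K - r) => (0 : ℝ)) j) * (Mᵀ * M)⁻¹ * Mᵀ)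
    (hPN : PN = (Matrix.of fun (a : Fin n) (j : Fin (p - r) ⊕ Fin (K - r)) =>
        Sum.elim (fun _ : Fin (p - r) => (0 : ℝ))
                 (fun j' : Fin (K - r) => Wt a ⟨r + j'.1, by have := j'.2; omega⟩) j)
        * (Mᵀ * M)⁻¹ * Mᵀ)
    (X : Matrix (Fin n) (Fin p) ℝ)
    (hXcol : LinearMap.range X.mulVecLin = LinearMap.range Z.mulVecLin)
    (hXinv : IsUnit (Xᵀ * X).det)
    (β θ : Fin p → ℝ) (α : Fin n → ℝ)
    (hθmem : X.mulVec θ ∈ Submodule.span ℝ (Set.range (fun j : Fin r =>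
        fun a : Fin n => Zt a ⟨j.1, by have := j.2; omega⟩)))
    (hβmem : X.mulVec β ∈ Submodule.span ℝ (Set.range (fun j : Fin (p - r) =>
        fun a : Fin n => Zt a ⟨r + j.1, by have := j.2; omega⟩)))
    (hαmem : α ∈ Submodule.span ℝ (Set.range (fun j : Fin (K - r) =>
        fun a : Fin n => Wt a ⟨r + j.1, by have := j.2; omega⟩))) :
    θ = ((Xᵀ * X)⁻¹ * Xᵀ * PR).mulVec (X.mulVec β + X.mulVec θ + α)
    ∧ β = ((Xᵀ * X)⁻¹ * Xᵀ * PC).mulVec (X.mulVec β + X.mulVec θ + α)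
    ∧ α = PN.mulVec (X.mulVec β + X.mulVec θ + α) := by
  -- sign facts about σ
  have hσnn : ∀ k : ℕ, 0 ≤ σ (r + k) := by
    intro k
    by_cases h : r + s ≤ r + k
    · rw [hσzero _ h]
    · exact le_of_lt (lt_of_lt_of_le hσpos (hσanti (r + k) (r + s - 1) (by omega)))
  have hσl1 : ∀ k : ℕ, σ (r + k) < 1 :=
    fun k => lt_of_le_of_lt (hσanti r (r + k) (by omega)) hσlt
  -- orthonormality of the rotated frames
  have hZtZt : Ztᵀ * Zt = 1 := by
    rw [hZt, Matrix.transpose_mul, Matrix.mul_assoc, ← Matrix.mul_assoc Zᵀ Z U, hZ,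
      Matrix.one_mul, hU]
  have hWtWt : Wtᵀ * Wt = 1 := by
    rw [hWt, Matrix.transpose_mul, Matrix.mul_assoc, ← Matrix.mul_assoc Wᵀ W V, hW,
      Matrix.one_mul, hV]
  have hZtWt : Ztᵀ * Wt = Matrix.of fun (i : Fin p) (j : Fin K) =>
      if (i : ℕ) = (j : ℕ) then σ (i : ℕ) else 0 := by
    rw [hZt, hWt, Matrix.transpose_mul, Matrix.mul_assoc, ← Matrix.mul_assoc Zᵀ W V, hSVD]
    simp only [Matrix.mul_assoc]
    rw [hV, Matrix.mul_one, ← Matrix.mul_assoc, hU, Matrix.one_mul]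
  -- dot product facts, sum form
  have hdZZ : ∀ (a b : Fin p), (∑ x : Fin n, Zt x a * Zt x b) = if a = b then (1:ℝ) else 0 := by
    intro a b
    have h := congrFun (congrFun hZtZt a) b
    simpa [Matrix.mul_apply, Matrix.transpose_apply, Matrix.one_apply] using h
  have hdZW : ∀ (a : Fin p) (b : Fin K), (∑ x : Fin n, Zt x a * Wt x b)
      = if (a : ℕ) = (b : ℕ) then σ (a : ℕ) else 0 := by
    intro a b
    have h := congrFun (congrFun hZtWt a) b
    simpa [Matrix.mul_apply, Matrix.transpose_apply] using h
  have hdWW : ∀ (a b : Fin K), (∑ x : Fin n, Wt x a * Wt x b) = if a = b then (1:ℝ) else 0 := by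
    intro a b
    have h := congrFun (congrFun hWtWt a) b
    simpa [Matrix.mul_apply, Matrix.transpose_apply, Matrix.one_apply] using h
  -- dot product facts, dotProduct form
  have hdZZ' : ∀ (a b : Fin p),
      ((fun x : Fin n => Zt x a) ⬝ᵥ (fun x : Fin n => Zt x b)) = if a = b then (1:ℝ) else 0 := by
    intro a b
    simpa [dotProduct] using hdZZ a b
  have hdZW' : ∀ (a : Fin p) (b : Fin K),
      ((fun x : Fin n => Zt x a) ⬝ᵥ (fun x : Fin n => Wt x b))
        = if (a : ℕ) = (b : ℕ) then σ (a : ℕ) else 0 := by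
    intro a b
    simpa [dotProduct] using hdZW a b
  -- the Gram matrix of M
  have hMM : Mᵀ * M = Gm (p - r) (K - r) (fun k => σ (r + k)) := by
    ext x y
    cases x with
    | inl i =>
      cases y with
      | inl i' =>
        rw [Matrix.mul_apply]
        simp only [Matrix.transpose_apply, hMl]
        rw [hdZZ]
        by_cases h : (i : ℕ) = (i' : ℕ) <;> simp [Gm, Fin.ext_iff, h]
      | inr j =>
        rw [Matrix.mul_apply]
        simp only [Matrix.transpose_apply, hMl, hMr]
        rw [hdZW]
        by_cases h : (i : ℕ) = (j : ℕ) <;> simp [Gm, h]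
    | inr j =>
      cases y with
      | inl i' =>
        rw [Matrix.mul_apply]
        simp only [Matrix.transpose_apply, hMl, hMr]
        rw [Finset.sum_congr rfl (fun x _ => mul_comm (Wt x _) (Zt x _)), hdZW]
        by_cases h : (j : ℕ) = (i' : ℕ)
        · simp [Gm, h]
        · simp [Gm, h, Ne.symm h]
      | inr j' =>
        rw [Matrix.mul_apply]
        simp only [Matrix.transpose_apply, hMr]
        rw [hdWW]
        by_cases h : (j : ℕ) = (j' : ℕ) <;> simp [Gm, Fin.ext_iff, h]
  -- invertibility of the Gram matrix
  have hGN : Gm (p - r) (K - r) (fun k => σ (r + k)) * Nm (p - r) (K - r) (fun k => σ (r + k)) = 1 :=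
    Gm_mul_Nm _ _ _ (fun k => hσnn k) (fun k => hσl1 k)
      (fun k hk => hσzero _ (by omega)) (fun k hk => hσzero _ (by omega))
  have hdet : IsUnit (Mᵀ * M).det :=
    Matrix.isUnit_det_of_right_inverse (B := Nm (p - r) (K - r) (fun k => σ (r + k)))
      (by rw [hMM]; exact hGN)
  have hinv : (Mᵀ * M)⁻¹ * (Mᵀ * M) = 1 := Matrix.nonsing_inv_mul _ hdet
  -- PC * M and PN * M
  have hPCM : PC * M = (Matrix.of fun (a : Fin n) (j : Fin (p - r) ⊕ Fin (K - r)) =>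
      Sum.elim (fun j' : Fin (p - r) => Zt a ⟨r + j'.1, by have := j'.2; omega⟩)
               (fun _ : Fin (K - r) => (0 : ℝ)) j) := by
    rw [hPC, Matrix.mul_assoc, Matrix.mul_assoc, hinv, Matrix.mul_one]
  have hPNM : PN * M = (Matrix.of fun (a : Fin n) (j : Fin (p - r) ⊕ Fin (K - r)) =>
      Sum.elim (fun _ : Fin (p - r) => (0 : ℝ))
               (fun j' : Fin (K - r) => Wt a ⟨r + j'.1, by have := j'.2; omega⟩) j) := by
    rw [hPN, Matrix.mul_assoc, Matrix.mul_assoc, hinv, Matrix.mul_one]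
  -- Mᵀ kills the leading Z̃ columns
  have hMTz : ∀ i : Fin r,
      Mᵀ *ᵥ (fun a : Fin n => Zt a ⟨i.1, by have := i.2; omega⟩) = 0 := by
    intro i
    funext x
    cases x with
    | inl k =>
      simp only [Matrix.mulVec, dotProduct, Matrix.transpose_apply, hMl,
        Pi.zero_apply]
      rw [hdZZ, if_neg]
      intro hcon
      have hv : r + k.1 = i.1 := congrArg Fin.val hcon
      have := i.2
      omega
    | inr k =>
      simp only [Matrix.mulVec, dotProduct, Matrix.transpose_apply, hMr,
        Pi.zero_apply]
      rw [Finset.sum_congr rfl (fun x _ => mul_comm (Wt x _) (Zt x _)), hdZW,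
        if_neg (fun hcon => by
          have hv : i.1 = r + k.1 := hcon
          have := i.2
          omega)]
  -- PR applied to generators
  have hPRv : ∀ v : Fin n → ℝ, PR *ᵥ v = ∑ i ∈ (Finset.range r).attach,
      ((fun a : Fin n => Zt a ⟨i.1, by have := Finset.mem_range.mp i.2; omega⟩) ⬝ᵥ v) •
      (fun a : Fin n => Zt a ⟨i.1, by have := Finset.mem_range.mp i.2; omega⟩) := by
    intro v
    rw [hPR, aux_sum_mulVec]
    exact Finset.sum_congr rfl fun i _ => aux_vecMulVec_mulVec _ _ _
  have hPRgθ : ∀ i : Fin r, PR *ᵥ (fun a : Fin n => Zt a ⟨i.1, by have := i.2; omega⟩)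
      = fun a : Fin n => Zt a ⟨i.1, by have := i.2; omega⟩ := by
    intro i
    rw [hPRv]
    rw [Finset.sum_eq_single (⟨i.1, Finset.mem_range.mpr i.2⟩ : {x // x ∈ Finset.range r})
        (fun b _ hb => by
          rw [hdZZ', if_neg, zero_smul]
          intro hcon
          exact hb (Subtype.ext (congrArg Fin.val hcon)))
        (fun hb => absurd (Finset.mem_attach _ _) hb)]
    rw [hdZZ', if_pos rfl, one_smul]
  have hPRgβ : ∀ j : Fin (p - r),
      PR *ᵥ (fun a : Fin n => Zt a ⟨r + j.1, by have := j.2; omega⟩) = 0 := by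
    intro j
    rw [hPRv]
    apply Finset.sum_eq_zero
    intro k _
    rw [hdZZ', if_neg, zero_smul]
    intro hcon
    have hv : k.1 = r + j.1 := congrArg Fin.val hcon
    have := Finset.mem_range.mp k.2
    omega
  have hPRgα : ∀ j : Fin (K - r),
      PR *ᵥ (fun a : Fin n => Wt a ⟨r + j.1, by have := j.2; omega⟩) = 0 := by
    intro j
    rw [hPRv]
    apply Finset.sum_eq_zero
    intro k _
    rw [hdZW', if_neg (fun hcon => by
      have hv : k.1 = r + j.1 := hcon
      have := Finset.mem_range.mp k.2
      omega), zero_smul]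
  -- PC and PN applied to generators
  have hPCgθ : ∀ i : Fin r,
      PC *ᵥ (fun a : Fin n => Zt a ⟨i.1, by have := i.2; omega⟩) = 0 := by
    intro i
    rw [hPC, ← Matrix.mulVec_mulVec, hMTz i, Matrix.mulVec_zero]
  have hPNgθ : ∀ i : Fin r,
      PN *ᵥ (fun a : Fin n => Zt a ⟨i.1, by have := i.2; omega⟩) = 0 := by
    intro i
    rw [hPN, ← Matrix.mulVec_mulVec, hMTz i, Matrix.mulVec_zero]
  have hcolZ : ∀ j : Fin (p - r),
      (fun a : Fin n => Zt a ⟨r + j.1, by have := j.2; omega⟩)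
        = M *ᵥ Pi.single (Sum.inl j) 1 := by
    intro j
    funext a
    simp [Matrix.mulVec_single, hMl]
  have hcolW : ∀ j : Fin (K - r),
      (fun a : Fin n => Wt a ⟨r + j.1, by have := j.2; omega⟩)
        = M *ᵥ Pi.single (Sum.inr j) 1 := by
    intro j
    funext a
    simp [Matrix.mulVec_single, hMr]
  have hPCgβ : ∀ j : Fin (p - r),
      PC *ᵥ (fun a : Fin n => Zt a ⟨r + j.1, by have := j.2; omega⟩)
        = fun a : Fin n => Zt a ⟨r + j.1, by have := j.2; omega⟩ := by
    intro j
    rw [hcolZ j, Matrix.mulVec_mulVec, hPCM]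
    funext a
    simp [Matrix.mulVec_single, hMl, hMr]
  have hPCgα : ∀ j : Fin (K - r),
      PC *ᵥ (fun a : Fin n => Wt a ⟨r + j.1, by have := j.2; omega⟩) = 0 := by
    intro j
    rw [hcolW j, Matrix.mulVec_mulVec, hPCM]
    funext a
    simp [Matrix.mulVec_single, hMl, hMr]
  have hPNgβ : ∀ j : Fin (p - r),
      PN *ᵥ (fun a : Fin n => Zt a ⟨r + j.1, by have := j.2; omega⟩) = 0 := by
    intro j
    rw [hcolZ j, Matrix.mulVec_mulVec, hPNM]
    funext a
    simp [Matrix.mulVec_single, hMl, hMr]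
  have hPNgα : ∀ j : Fin (K - r),
      PN *ᵥ (fun a : Fin n => Wt a ⟨r + j.1, by have := j.2; omega⟩)
        = fun a : Fin n => Wt a ⟨r + j.1, by have := j.2; omega⟩ := by
    intro j
    rw [hcolW j, Matrix.mulVec_mulVec, hPNM]
    funext a
    simp [Matrix.mulVec_single, hMl, hMr]
  -- linear decompositions
  obtain ⟨cθ, hcθ⟩ := (Submodule.mem_span_range_iff_exists_fun ℝ).mp hθmem
  obtain ⟨cβ, hcβ⟩ := (Submodule.mem_span_range_iff_exists_fun ℝ).mp hβmem
  obtain ⟨cα, hcα⟩ := (Submodule.mem_span_range_iff_exists_fun ℝ).mp hαmem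
  have hlin : ∀ (Q : Matrix (Fin n) (Fin n) ℝ) {ι : Type} [Fintype ι] (c : ι → ℝ)
      (g : ι → Fin n → ℝ), Q *ᵥ (∑ i2, c i2 • g i2) = ∑ i2, c i2 • (Q *ᵥ g i2) := by
    intro Q ι _ c g
    rw [aux_mulVec_sum]
    exact Finset.sum_congr rfl fun i2 _ => Matrix.mulVec_smul Q (c i2) (g i2)
  -- projections of the three summands
  have hPRXθ : PR *ᵥ (X *ᵥ θ) = X *ᵥ θ := by
    rw [← hcθ, hlin]
    exact Finset.sum_congr rfl fun i _ => congrArg (fun w => cθ i • w) (hPRgθ i)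
  have hPRXβ : PR *ᵥ (X *ᵥ β) = 0 := by
    rw [← hcβ, hlin]
    exact Finset.sum_eq_zero fun i _ =>
      (congrArg (fun w => cβ i • w) (hPRgβ i)).trans (smul_zero _)
  have hPRα : PR *ᵥ α = 0 := by
    rw [← hcα, hlin]
    exact Finset.sum_eq_zero fun i _ =>
      (congrArg (fun w => cα i • w) (hPRgα i)).trans (smul_zero _)
  have hPCXθ : PC *ᵥ (X *ᵥ θ) = 0 := by
    rw [← hcθ, hlin]
    exact Finset.sum_eq_zero fun i _ =>
      (congrArg (fun w => cθ i • w) (hPCgθ i)).trans (smul_zero _)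
  have hPCXβ : PC *ᵥ (X *ᵥ β) = X *ᵥ β := by
    rw [← hcβ, hlin]
    exact Finset.sum_congr rfl fun i _ => congrArg (fun w => cβ i • w) (hPCgβ i)
  have hPCα : PC *ᵥ α = 0 := by
    rw [← hcα, hlin]
    exact Finset.sum_eq_zero fun i _ =>
      (congrArg (fun w => cα i • w) (hPCgα i)).trans (smul_zero _)
  have hPNXθ : PN *ᵥ (X *ᵥ θ) = 0 := by
    rw [← hcθ, hlin]
    exact Finset.sum_eq_zero fun i _ =>
      (congrArg (fun w => cθ i • w) (hPNgθ i)).trans (smul_zero _)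
  have hPNXβ : PN *ᵥ (X *ᵥ β) = 0 := by
    rw [← hcβ, hlin]
    exact Finset.sum_eq_zero fun i _ =>
      (congrArg (fun w => cβ i • w) (hPNgβ i)).trans (smul_zero _)
  have hPNα : PN *ᵥ α = α := by
    rw [← hcα, hlin]
    exact Finset.sum_congr rfl fun i _ => congrArg (fun w => cα i • w) (hPNgα i)
  have hyR : PR *ᵥ (X *ᵥ β + X *ᵥ θ + α) = X *ᵥ θ := by
    rw [Matrix.mulVec_add, Matrix.mulVec_add, hPRXβ, hPRXθ, hPRα]
    simp
  have hyC : PC *ᵥ (X *ᵥ β + X *ᵥ θ + α) = X *ᵥ β := by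
    rw [Matrix.mulVec_add, Matrix.mulVec_add, hPCXβ, hPCXθ, hPCα]
    simp
  have hyN : PN *ᵥ (X *ᵥ β + X *ᵥ θ + α) = α := by
    rw [Matrix.mulVec_add, Matrix.mulVec_add, hPNXβ, hPNXθ, hPNα]
    simp
  refine ⟨?_, ?_, ?_⟩
  · rw [← Matrix.mulVec_mulVec, hyR, Matrix.mulVec_mulVec, Matrix.mul_assoc,
      Matrix.nonsing_inv_mul _ hXinv, Matrix.one_mulVec]
  · rw [← Matrix.mulVec_mulVec, hyC, Matrix.mulVec_mulVec, Matrix.mul_assoc,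
      Matrix.nonsing_inv_mul _ hXinv, Matrix.one_mulVec]
  · rw [hyN]
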